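/- Let Ω1 = {X ∈ R^{n1×n2} : every column of X has at most s1 nonzero entries}, Ω2 = {X ∈ R^{n1×n2} : X has at most s2 nonzero columns}, and Ω12 = Ω1 ∩ Ω2. Let Y ∈ R^{n1×n2}, let X1 be a best Frobenius-norm approximation of Y in Ω1 (obtained by setting to zero all but the s1 largest-magnitude entries in each column of Y), and let X2 be a best Frobenius-norm approximation of X1 in Ω2 (obtained by setting to zero all but the s2 columns of X1 with largest ℓ2 norm). Then X2 is a best Frobenius-norm approximation of Y in Ω12, i.e., ‖X2 − Y‖_F ≤ ‖Z − Y‖_F for every Z ∈ Ω12. -/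

import Mathlib

open Matrix

/-- The Frobenius norm of a real matrix. -/
noncomputable def frobNorm {n1 n2 : ℕ} (M : Matrix (Fin n1) (Fin n2) ℝ) : ℝ :=
  Real.sqrt (∑ i, ∑ j, (M i j) ^ 2)

/-- The set of matrices each of whose columns has at most `s1` nonzero entries. -/
def colSparse (n1 n2 s1 : ℕ) : Set (Matrix (Fin n1) (Fin n2) ℝ) :=
  {X | ∀ k : Fin n2, {i : Fin n1 | X i k ≠ 0}.ncard ≤ s1}

/-- The set of matrices with at most `s2` nonzero columns. -/
def fewCols (n1 n2 s2 : ℕ) : Set (Matrix (Fin n1) (Fin n2) ℝ) :=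
  {X | {k : Fin n2 | ∃ i : Fin n1, X i k ≠ 0}.ncard ≤ s2}

/-- Frobenius norm comparison reduces to comparison of column-wise sums of squares. -/
lemma frob_sq_le {n1 n2 : ℕ} {A B : Matrix (Fin n1) (Fin n2) ℝ}
    (h : frobNorm A ≤ frobNorm B) :
    ∑ j, ∑ i, (A i j) ^ 2 ≤ ∑ j, ∑ i, (B i j) ^ 2 := by
  have ha : (0:ℝ) ≤ ∑ i, ∑ j, (A i j) ^ 2 := by positivity
  have hb : (0:ℝ) ≤ ∑ i, ∑ j, (B i j) ^ 2 := by positivity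
  have key : ∑ i, ∑ j, (A i j) ^ 2 ≤ ∑ i, ∑ j, (B i j) ^ 2 := by
    unfold frobNorm at h
    nlinarith [Real.sq_sqrt ha, Real.sq_sqrt hb,
      Real.sqrt_nonneg (∑ i, ∑ j, (A i j) ^ 2), Real.sqrt_nonneg (∑ i, ∑ j, (B i j) ^ 2)]
  rw [Finset.sum_comm] at key
  rw [Finset.sum_comm (γ := Fin n1)] at key
  exact key

/-- Lemma 7 of the paper: if `X1` is a best Frobenius-norm approximation of `Y` among matrices
with `s1`-sparse columns, and `X2` is a best Frobenius-norm approximation of `X1` among matrices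
with at most `s2` nonzero columns, then `X2` is a best Frobenius-norm approximation of `Y` in the
intersection `Ω12` of the two sets. -/
theorem stmt9 {n1 n2 : ℕ} (s1 s2 : ℕ) (Y X1 X2 : Matrix (Fin n1) (Fin n2) ℝ)
    (hX1 : X1 ∈ colSparse n1 n2 s1)
    (hX1min : ∀ Z ∈ colSparse n1 n2 s1, frobNorm (X1 - Y) ≤ frobNorm (Z - Y))
    (hX2 : X2 ∈ fewCols n1 n2 s2)
    (hX2min : ∀ Z ∈ fewCols n1 n2 s2, frobNorm (X2 - X1) ≤ frobNorm (Z - X1)) :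
    X2 ∈ colSparse n1 n2 s1 ∩ fewCols n1 n2 s2 ∧
    ∀ Z ∈ colSparse n1 n2 s1 ∩ fewCols n1 n2 s2, frobNorm (X2 - Y) ≤ frobNorm (Z - Y) := by
  classical
  -- L1: per-column optimality of X1
  have hL1 : ∀ (k : Fin n2) (v : Fin n1 → ℝ), {i | v i ≠ 0}.ncard ≤ s1 →
      ∑ i, (X1 i k - Y i k) ^ 2 ≤ ∑ i, (v i - Y i k) ^ 2 := by
    intro k v hv
    set Zm : Matrix (Fin n1) (Fin n2) ℝ := fun i j => if j = k then v i else X1 i j with hZm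
    have hZmem : Zm ∈ colSparse n1 n2 s1 := by
      intro j
      by_cases hj : j = k
      · subst hj; simpa [hZm] using hv
      · simpa [hZm, hj] using hX1 j
    have h := frob_sq_le (hX1min Zm hZmem)
    have h1 : ∀ M : Matrix (Fin n1) (Fin n2) ℝ,
        ∑ j, ∑ i, ((M - Y) i j) ^ 2
          = (∑ i, (M i k - Y i k) ^ 2) + ∑ j ∈ Finset.univ.erase k, ∑ i, (M i j - Y i j) ^ 2 := by
      intro M
      rw [← Finset.add_sum_erase _ _ (Finset.mem_univ k)]
      simp [Matrix.sub_apply]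
    rw [h1 X1, h1 Zm] at h
    have heq : ∑ j ∈ Finset.univ.erase k, ∑ i, (Zm i j - Y i j) ^ 2
        = ∑ j ∈ Finset.univ.erase k, ∑ i, (X1 i j - Y i j) ^ 2 := by
      refine Finset.sum_congr rfl fun j hj => ?_
      have : j ≠ k := Finset.ne_of_mem_erase hj
      simp [hZm, this]
    rw [heq] at h
    have hzk : ∀ i, Zm i k = v i := fun i => by simp [hZm]
    simp only [hzk] at h
    linarith
  -- L2: X1 agrees with Y on its support
  have hkey : ∀ (i : Fin n1) (j : Fin n2), X1 i j ≠ 0 → X1 i j = Y i j := by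
    intro i0 j hne
    set v : Fin n1 → ℝ := fun i => if X1 i j = 0 then 0 else Y i j with hvdef
    have hsub : {i | v i ≠ 0} ⊆ {i | X1 i j ≠ 0} := by
      intro i hi
      simp only [Set.mem_setOf_eq, hvdef] at hi ⊢
      intro h0; exact hi (by simp [h0])
    have hv : {i | v i ≠ 0}.ncard ≤ s1 :=
      le_trans (Set.ncard_le_ncard hsub (Set.toFinite _)) (hX1 j)
    have h := hL1 j v hv
    have hterm : ∀ i, (v i - Y i j) ^ 2 ≤ (X1 i j - Y i j) ^ 2 := by
      intro i
      by_cases h0 : X1 i j = 0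
      · simp [hvdef, h0]
      · simp [hvdef, h0]
        positivity
    have hzero : ∑ i, ((X1 i j - Y i j) ^ 2 - (v i - Y i j) ^ 2) = 0 := by
      have h1 : ∑ i, ((X1 i j - Y i j) ^ 2 - (v i - Y i j) ^ 2)
          = ∑ i, (X1 i j - Y i j) ^ 2 - ∑ i, (v i - Y i j) ^ 2 := Finset.sum_sub_distrib _ _
      have h2 : (0:ℝ) ≤ ∑ i, ((X1 i j - Y i j) ^ 2 - (v i - Y i j) ^ 2) :=
        Finset.sum_nonneg fun i _ => by linarith [hterm i]
      linarith
    have := (Finset.sum_eq_zero_iff_of_nonneg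
      (fun i _ => by linarith [hterm i] : ∀ i ∈ Finset.univ,
        (0:ℝ) ≤ (X1 i j - Y i j) ^ 2 - (v i - Y i j) ^ 2)).mp hzero i0 (Finset.mem_univ i0)
    have hvi : v i0 = Y i0 j := by simp [hvdef, hne]
    rw [hvi] at this
    have : (X1 i0 j - Y i0 j) ^ 2 = 0 := by linarith [this]
    have := pow_eq_zero_iff (n := 2) (by norm_num) |>.mp this
    linarith
  -- pointwise identity
  have hptw : ∀ (i : Fin n1) (j : Fin n2), (X1 i j - Y i j) ^ 2 = (Y i j) ^ 2 - (X1 i j) ^ 2 := by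
    intro i j
    by_cases h0 : X1 i j = 0
    · simp [h0]
    · rw [hkey i j h0]; ring
  -- L3: nonzero columns of X2 equal those of X1
  have hL3 : ∀ k : Fin n2, (∃ i, X2 i k ≠ 0) → ∀ i, X2 i k = X1 i k := by
    intro k hk
    set Zm : Matrix (Fin n1) (Fin n2) ℝ := fun i j => if j = k then X1 i k else X2 i j with hZm
    have hZmem : Zm ∈ fewCols n1 n2 s2 := by
      have hsub : {j | ∃ i, Zm i j ≠ 0} ⊆ {j | ∃ i, X2 i j ≠ 0} := by
        intro j hj
        by_cases hjk : j = k
        · subst hjk; exact hk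
        · obtain ⟨i, hi⟩ := hj
          exact ⟨i, by simpa [hZm, hjk] using hi⟩
      exact le_trans (Set.ncard_le_ncard hsub (Set.toFinite _)) hX2
    have h := frob_sq_le (hX2min Zm hZmem)
    have h1 : ∀ M : Matrix (Fin n1) (Fin n2) ℝ,
        ∑ j, ∑ i, ((M - X1) i j) ^ 2
          = (∑ i, (M i k - X1 i k) ^ 2) + ∑ j ∈ Finset.univ.erase k, ∑ i, (M i j - X1 i j) ^ 2 := by
      intro M
      rw [← Finset.add_sum_erase _ _ (Finset.mem_univ k)]
      simp [Matrix.sub_apply]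
    rw [h1 X2, h1 Zm] at h
    have heq : ∑ j ∈ Finset.univ.erase k, ∑ i, (Zm i j - X1 i j) ^ 2
        = ∑ j ∈ Finset.univ.erase k, ∑ i, (X2 i j - X1 i j) ^ 2 := by
      refine Finset.sum_congr rfl fun j hj => ?_
      have : j ≠ k := Finset.ne_of_mem_erase hj
      simp [hZm, this]
    rw [heq] at h
    have hzk : ∀ i, Zm i k = X1 i k := fun i => by simp [hZm]
    simp only [hzk] at h
    have hsum0 : ∑ i, (X2 i k - X1 i k) ^ 2 = 0 := by
      have : (0:ℝ) ≤ ∑ i, (X2 i k - X1 i k) ^ 2 := by positivity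
      simp only [sub_self] at h
      simp at h
      linarith
    intro i
    have := (Finset.sum_eq_zero_iff_of_nonneg
      (fun i _ => by positivity : ∀ i ∈ Finset.univ, (0:ℝ) ≤ (X2 i k - X1 i k) ^ 2)).mp
      hsum0 i (Finset.mem_univ i)
    have := pow_eq_zero_iff (n := 2) (by norm_num) |>.mp this
    linarith
  -- X2 ∈ colSparse
  have hX2cs : X2 ∈ colSparse n1 n2 s1 := by
    intro k
    by_cases hk : ∃ i, X2 i k ≠ 0
    · have : {i | X2 i k ≠ 0} = {i | X1 i k ≠ 0} := by
        ext i; simp [hL3 k hk i]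
      rw [this]; exact hX1 k
    · push_neg at hk
      have : {i | X2 i k ≠ 0} = ∅ := by ext i; simp [hk i]
      simp [this]
  refine ⟨⟨hX2cs, hX2⟩, ?_⟩
  intro Z hZ
  obtain ⟨hZ1, hZ2⟩ := hZ
  -- column sums of squares
  set b : Fin n2 → ℝ := fun j => ∑ i, (Y i j) ^ 2 with hb
  set c : Fin n2 → ℝ := fun j => ∑ i, (X1 i j) ^ 2 with hc
  set S : Set (Fin n2) := {j | ∃ i, X2 i j ≠ 0} with hSdef
  set U : Set (Fin n2) := {j | ∃ i, Z i j ≠ 0} with hUdef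
  -- competitor W := X1 restricted to U
  set W : Matrix (Fin n1) (Fin n2) ℝ := fun i j => if j ∈ U then X1 i j else 0 with hW
  have hWmem : W ∈ fewCols n1 n2 s2 := by
    have hsub : {j | ∃ i, W i j ≠ 0} ⊆ U := by
      intro j hj
      obtain ⟨i, hi⟩ := hj
      by_contra hju
      simp [hW, hju] at hi
    exact le_trans (Set.ncard_le_ncard hsub (Set.toFinite _)) hZ2
  have hC := frob_sq_le (hX2min W hWmem)
  -- rewrite hC columnwise
  have hCL : ∀ j, ∑ i, ((X2 - X1) i j) ^ 2 = if j ∈ S then 0 else c j := by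
    intro j
    by_cases hj : j ∈ S
    · simp only [hj, if_pos]
      refine Finset.sum_eq_zero fun i _ => ?_
      simp [Matrix.sub_apply, hL3 j hj i]
    · have hz : ∀ i, X2 i j = 0 := by
        by_contra hcon
        push_neg at hcon
        exact hj hcon
      simp only [hj, if_neg, if_false]
      simp [Matrix.sub_apply, hz, hc]
  have hCR : ∀ j, ∑ i, ((W - X1) i j) ^ 2 = if j ∈ U then 0 else c j := by
    intro j
    by_cases hj : j ∈ U
    · simp only [Matrix.sub_apply]; simp [hW, hj]
    · simp only [Matrix.sub_apply]; simp [hW, hj, hc]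
  rw [Finset.sum_congr rfl (fun j _ => hCL j), Finset.sum_congr rfl (fun j _ => hCR j)] at hC
  -- main comparison, columnwise
  have hA : ∀ j, ∑ i, ((X2 - Y) i j) ^ 2 = b j - c j + (if j ∈ S then 0 else c j) := by
    intro j
    by_cases hj : j ∈ S
    · simp only [hj, if_pos, add_zero]
      calc ∑ i, ((X2 - Y) i j) ^ 2 = ∑ i, (X1 i j - Y i j) ^ 2 := by
            refine Finset.sum_congr rfl fun i _ => ?_
            rw [Matrix.sub_apply, hL3 j hj i]
        _ = ∑ i, ((Y i j) ^ 2 - (X1 i j) ^ 2) := Finset.sum_congr rfl fun i _ => hptw i j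
        _ = b j - c j := by rw [Finset.sum_sub_distrib]
    · have hz : ∀ i, X2 i j = 0 := by
        by_contra hcon; push_neg at hcon; exact hj hcon
      simp only [hj, if_neg, if_false]
      have : ∑ i, ((X2 - Y) i j) ^ 2 = b j := by
        simp [Matrix.sub_apply, hz, hb]
      rw [this]; ring
  have hB : ∀ j, b j - c j + (if j ∈ U then 0 else c j) ≤ ∑ i, ((Z - Y) i j) ^ 2 := by
    intro j
    by_cases hj : j ∈ U
    · simp only [hj, if_pos, add_zero]
      have hZsp : {i | Z i j ≠ 0}.ncard ≤ s1 := hZ1 j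
      have h := hL1 j (fun i => Z i j) hZsp
      have hbc : b j - c j = ∑ i, (X1 i j - Y i j) ^ 2 := by
        rw [Finset.sum_congr rfl (fun i _ => hptw i j), Finset.sum_sub_distrib]
      rw [hbc]
      calc ∑ i, (X1 i j - Y i j) ^ 2 ≤ ∑ i, ((fun i => Z i j) i - Y i j) ^ 2 := h
        _ = ∑ i, ((Z - Y) i j) ^ 2 := by simp [Matrix.sub_apply]
    · have hz : ∀ i, Z i j = 0 := by
        by_contra hcon; push_neg at hcon; exact hj hcon
      simp only [hj, if_neg, if_false]
      have : ∑ i, ((Z - Y) i j) ^ 2 = b j := by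
        simp [Matrix.sub_apply, hz, hb]
      rw [this]; ring_nf; linarith
  -- conclude
  unfold frobNorm
  apply Real.sqrt_le_sqrt
  rw [Finset.sum_comm]
  rw [Finset.sum_comm (γ := Fin n1)]
  calc ∑ j, ∑ i, ((X2 - Y) i j) ^ 2
      = ∑ j, (b j - c j + (if j ∈ S then 0 else c j)) :=
        Finset.sum_congr rfl fun j _ => hA j
    _ = ∑ j, (b j - c j) + ∑ j, (if j ∈ S then 0 else c j) := Finset.sum_add_distrib
    _ ≤ ∑ j, (b j - c j) + ∑ j, (if j ∈ U then 0 else c j) := by linarith [hC]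
    _ = ∑ j, (b j - c j + (if j ∈ U then 0 else c j)) := Finset.sum_add_distrib.symm
    _ ≤ ∑ j, ∑ i, ((Z - Y) i j) ^ 2 := Finset.sum_le_sum fun j _ => hB j
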